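/- Let P and Q be d×d real symmetric positive definite matrices and let A be an invertible d×d real matrix. Then Aᵀ P A and Aᵀ Q A are symmetric positive definite and δ(Aᵀ P A, Aᵀ Q A) = δ(P, Q), i.e. the AIRM distance is invariant under congruence by invertible matrices. -/

import Mathlib

open Matrix Real Classical

/-- The unique SPD square root of an SPD matrix (junk value `0` off the PSD matrices). -/
noncomputable def spdSqrt {d : ℕ} (M : Matrix (Fin d) (Fin d) ℝ) : Matrix (Fin d) (Fin d) ℝ :=
  if h : M.PosSemidef then h.1.cfc Real.sqrt else 0

/-- The matrix logarithm of a symmetric matrix, obtained by applying `Real.log` to the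
eigenvalues via the Hermitian functional calculus (junk value `0` off the Hermitian matrices). -/
noncomputable def spdLog {d : ℕ} (M : Matrix (Fin d) (Fin d) ℝ) : Matrix (Fin d) (Fin d) ℝ :=
  if h : M.IsHermitian then h.cfc Real.log else 0

/-- The Frobenius norm of a real matrix. -/
noncomputable def frobNorm {d : ℕ} (M : Matrix (Fin d) (Fin d) ℝ) : ℝ :=
  Real.sqrt (∑ i, ∑ j, (M i j) ^ 2)

/-- The affine-invariant Riemannian (AIRM) distance
`δ(P,Q) = ‖log (P^{-1/2} Q P^{-1/2})‖_F` on SPD matrices. -/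
noncomputable def airmDist {d : ℕ} (P Q : Matrix (Fin d) (Fin d) ℝ) : ℝ :=
  frobNorm (spdLog ((spdSqrt P)⁻¹ * Q * (spdSqrt P)⁻¹))

/-- Congruence by an invertible matrix preserves positive definiteness. -/
lemma posDef_conj {d : ℕ} {P A : Matrix (Fin d) (Fin d) ℝ} (hP : P.PosDef) (hA : IsUnit A) :
    (Aᵀ * P * A).PosDef := by
  constructor
  · have h := Matrix.isHermitian_conjTranspose_mul_mul A hP.1
    simpa [Matrix.conjTranspose_eq_transpose_of_trivial] using h
  · have h := (hP.conjTranspose_mul_mul_same (B := A)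
      (Matrix.mulVec_injective_iff_isUnit.2 hA)).2
    simpa [Matrix.conjTranspose_eq_transpose_of_trivial] using h

lemma spdSqrt_eq {d : ℕ} {P : Matrix (Fin d) (Fin d) ℝ} (hP : P.PosDef) :
    spdSqrt P = hP.posSemidef.1.cfc Real.sqrt := dif_pos hP.posSemidef

lemma spdSqrt_mul_self {d : ℕ} {P : Matrix (Fin d) (Fin d) ℝ} (hP : P.PosDef) :
    spdSqrt P * spdSqrt P = P := by
  rw [spdSqrt_eq hP, ← Matrix.IsHermitian.cfc_eq, ← cfc_mul Real.sqrt Real.sqrt P]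
  conv_rhs => rw [← cfc_id' ℝ P hP.1.isSelfAdjoint]
  refine cfc_congr fun x hx => ?_
  rw [hP.1.spectrum_real_eq_range_eigenvalues] at hx
  obtain ⟨i, rfl⟩ := hx
  exact Real.mul_self_sqrt (hP.eigenvalues_pos i).le

lemma spdSqrt_isHermitian {d : ℕ} {P : Matrix (Fin d) (Fin d) ℝ} (hP : P.PosDef) :
    (spdSqrt P).IsHermitian := by
  rw [spdSqrt_eq hP, ← Matrix.IsHermitian.cfc_eq]; exact cfc_predicate Real.sqrt P

lemma spdSqrt_isUnit {d : ℕ} {P : Matrix (Fin d) (Fin d) ℝ} (hP : P.PosDef) :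
    IsUnit (spdSqrt P) := by
  rw [Matrix.isUnit_iff_isUnit_det, isUnit_iff_ne_zero]
  intro h
  have : (spdSqrt P * spdSqrt P).det = P.det := by rw [spdSqrt_mul_self hP]
  rw [Matrix.det_mul, h, mul_zero] at this
  exact (ne_of_gt hP.det_pos) this.symm

/-- Conjugation by an orthogonal matrix as a star algebra homomorphism on real matrices. -/
noncomputable def conjSAH {d : ℕ} (B : Matrix (Fin d) (Fin d) ℝ) (hB : B * Bᵀ = 1) :
    Matrix (Fin d) (Fin d) ℝ →⋆ₐ[ℝ] Matrix (Fin d) (Fin d) ℝ where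
  toFun X := B * X * Bᵀ
  map_one' := by show B * 1 * Bᵀ = 1; rw [mul_one, hB]
  map_mul' X Y := by
    show B * (X * Y) * Bᵀ = (B * X * Bᵀ) * (B * Y * Bᵀ)
    have h2 : Bᵀ * B = 1 := mul_eq_one_comm.mp hB
    calc B * (X * Y) * Bᵀ = B * X * 1 * (Y * Bᵀ) := by
          rw [Matrix.mul_one]; simp only [Matrix.mul_assoc]
      _ = B * X * (Bᵀ * B) * (Y * Bᵀ) := by rw [h2]
      _ = (B * X * Bᵀ) * (B * Y * Bᵀ) := by simp only [Matrix.mul_assoc]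
  map_zero' := by simp
  map_add' X Y := by simp [Matrix.mul_add, Matrix.add_mul]
  commutes' r := by
    simp [Algebra.algebraMap_eq_smul_one, Matrix.mul_smul, Matrix.smul_mul, hB]
  map_star' X := by
    simp [Matrix.star_eq_conjTranspose, Matrix.conjTranspose_eq_transpose_of_trivial,
      Matrix.transpose_mul, Matrix.mul_assoc]

/-- `spdLog` commutes with conjugation by an orthogonal matrix on positive definite matrices. -/
lemma spdLog_conj {d : ℕ} {B M : Matrix (Fin d) (Fin d) ℝ} (hB : B * Bᵀ = 1) (hM : M.PosDef) :
    spdLog (B * M * Bᵀ) = B * spdLog M * Bᵀ := by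
  have hBu : IsUnit B := (Matrix.isUnit_iff_isUnit_det _).mpr (Matrix.isUnit_det_of_right_inverse hB)
  have hM' : (B * M * Bᵀ).PosDef := by
    have hBuT : IsUnit Bᵀ := (Matrix.isUnit_iff_isUnit_det _).mpr
      (Matrix.isUnit_det_of_right_inverse (mul_eq_one_comm.mp hB))
    have := posDef_conj (A := Bᵀ) hM hBuT
    simpa using this
  rw [spdLog, spdLog, dif_pos hM'.1, dif_pos hM.1, ← Matrix.IsHermitian.cfc_eq,
    ← Matrix.IsHermitian.cfc_eq]
  have hspec : spectrum ℝ M ⊆ {(0 : ℝ)}ᶜ := by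
    rw [hM.1.spectrum_real_eq_range_eigenvalues]
    rintro - ⟨i, rfl⟩
    exact ne_of_gt (hM.eigenvalues_pos i)
  have hlog : ContinuousOn Real.log (spectrum ℝ M) := Real.continuousOn_log.mono hspec
  have hsa : IsSelfAdjoint M := hM.1.isSelfAdjoint
  have hsa' : IsSelfAdjoint (B * M * Bᵀ) := hM'.1.isSelfAdjoint
  have hcont : Continuous (conjSAH B hB) := by
    show Continuous fun X => B * X * Bᵀ
    exact (continuous_const.matrix_mul continuous_id).matrix_mul continuous_const
  have h := StarAlgHomClass.map_cfc (S := ℝ) (conjSAH B hB) Real.log M hlog hcont hsa hsa'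
  exact h.symm

/-- The Frobenius norm is invariant under conjugation by an orthogonal matrix. -/
lemma frobNorm_conj {d : ℕ} {B : Matrix (Fin d) (Fin d) ℝ} (hB : B * Bᵀ = 1)
    (N : Matrix (Fin d) (Fin d) ℝ) : frobNorm (B * N * Bᵀ) = frobNorm N := by
  have key : ∀ X : Matrix (Fin d) (Fin d) ℝ, ∑ i, ∑ j, (X i j) ^ 2 = (Xᵀ * X).trace := by
    intro X
    rw [Matrix.trace]
    simp only [Matrix.diag, Matrix.mul_apply, Matrix.transpose_apply, ← sq]
    exact Finset.sum_comm
  have h2 : Bᵀ * B = 1 := mul_eq_one_comm.mp hB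
  rw [frobNorm, frobNorm, key, key]
  congr 1
  have e1 : (B * N * Bᵀ)ᵀ * (B * N * Bᵀ) = B * (Nᵀ * N) * Bᵀ := by
    have : (B * N * Bᵀ)ᵀ * (B * N * Bᵀ) = B * (Nᵀ * ((Bᵀ * B) * (N * Bᵀ))) := by
      simp [Matrix.transpose_mul, Matrix.mul_assoc]
    rw [this, h2, one_mul]
    simp only [Matrix.mul_assoc]
  rw [e1, Matrix.trace_mul_comm, ← Matrix.mul_assoc, h2, one_mul]

/-- The AIRM distance is invariant under congruence by invertible matrices. -/
theorem stmt_7 {d : ℕ} (P Q A : Matrix (Fin d) (Fin d) ℝ)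
    (hP : P.PosDef) (hQ : Q.PosDef) (hA : IsUnit A) :
    (Aᵀ * P * A).PosDef ∧ (Aᵀ * Q * A).PosDef ∧
      airmDist (Aᵀ * P * A) (Aᵀ * Q * A) = airmDist P Q := by
  have hP' : (Aᵀ * P * A).PosDef := posDef_conj hP hA
  have hQ' : (Aᵀ * Q * A).PosDef := posDef_conj hQ hA
  refine ⟨hP', hQ', ?_⟩
  set S := spdSqrt P with hSdef
  set T := spdSqrt (Aᵀ * P * A) with hTdef
  have hS : IsUnit S := spdSqrt_isUnit hP
  have hT : IsUnit T := spdSqrt_isUnit hP'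
  have hSdet : IsUnit S.det := (Matrix.isUnit_iff_isUnit_det S).mp hS
  have hTdet : IsUnit T.det := (Matrix.isUnit_iff_isUnit_det T).mp hT
  have hSS : S * S = P := spdSqrt_mul_self hP
  have hTT : T * T = Aᵀ * P * A := spdSqrt_mul_self hP'
  have hSh : Sᵀ = S := by
    have := (spdSqrt_isHermitian hP)
    rwa [Matrix.IsHermitian, Matrix.conjTranspose_eq_transpose_of_trivial] at this
  have hTh : Tᵀ = T := by
    have := (spdSqrt_isHermitian hP')
    rwa [Matrix.IsHermitian, Matrix.conjTranspose_eq_transpose_of_trivial] at this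
  have hSinv : S * S⁻¹ = 1 := Matrix.mul_nonsing_inv _ hSdet
  have hSinv' : S⁻¹ * S = 1 := Matrix.nonsing_inv_mul _ hSdet
  have hTinv : T * T⁻¹ = 1 := Matrix.mul_nonsing_inv _ hTdet
  have hTinv' : T⁻¹ * T = 1 := Matrix.nonsing_inv_mul _ hTdet
  set B := T⁻¹ * Aᵀ * S with hBdef
  have hSinvT : (S⁻¹)ᵀ = S⁻¹ := by rw [Matrix.transpose_nonsing_inv, hSh]
  have hTinvT : (T⁻¹)ᵀ = T⁻¹ := by rw [Matrix.transpose_nonsing_inv, hTh]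
  have hBO : B * Bᵀ = 1 := by
    have hBt : Bᵀ = S * A * T⁻¹ := by
      rw [hBdef]
      simp [Matrix.transpose_mul, hSh, hTinvT, Matrix.mul_assoc]
    rw [hBt, hBdef]
    calc T⁻¹ * Aᵀ * S * (S * A * T⁻¹)
        = T⁻¹ * (Aᵀ * (S * S) * A) * T⁻¹ := by simp only [Matrix.mul_assoc]
      _ = T⁻¹ * (T * T) * T⁻¹ := by rw [hSS, hTT]
      _ = 1 := by
          rw [show T⁻¹ * (T * T) * T⁻¹ = T⁻¹ * T * (T * T⁻¹) by simp only [Matrix.mul_assoc],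
            hTinv, hTinv', one_mul]
  -- the conjugated argument
  have hMQ : T⁻¹ * (Aᵀ * Q * A) * T⁻¹ = B * (S⁻¹ * Q * S⁻¹) * Bᵀ := by
    have hBt : Bᵀ = S * A * T⁻¹ := by
      rw [hBdef]
      simp [Matrix.transpose_mul, hSh, hTinvT, Matrix.mul_assoc]
    rw [hBt, hBdef]
    symm
    calc T⁻¹ * Aᵀ * S * (S⁻¹ * Q * S⁻¹) * (S * A * T⁻¹)
        = T⁻¹ * Aᵀ * (S * S⁻¹) * Q * (S⁻¹ * S) * (A * T⁻¹) := by simp only [Matrix.mul_assoc]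
      _ = T⁻¹ * (Aᵀ * Q * A) * T⁻¹ := by
          rw [hSinv, hSinv']
          simp only [Matrix.mul_one, Matrix.one_mul, Matrix.mul_assoc]
  have hMpos : (S⁻¹ * Q * S⁻¹).PosDef := by
    have hSinvU : IsUnit S⁻¹ := (Matrix.isUnit_iff_isUnit_det _).mpr
      (Matrix.isUnit_det_of_right_inverse hSinv')
    have := posDef_conj (A := S⁻¹) hQ hSinvU
    rwa [hSinvT] at this
  rw [airmDist, airmDist, ← hSdef, ← hTdef, hMQ, spdLog_conj hBO hMpos, frobNorm_conj hBO]
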